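/- arXiv:1906.01770 — 2 statements merged into one kernel-verified Lean document; each statement's English description precedes it below -/
import Mathlib

section
/- For two policies π₁, π₂ in a finite MDP with discount γ ∈ [0,1), the L1 distance between their discounted state distributions satisfies D(π₁, π₂) ≤ γ(1−γ)^{-1} ‖(P^{π₁} − P^{π₂}) d_{π₂}‖₁, where P^{π} is the state transition matrix induced by policy π. -/
open Matrix

open scoped BigOperators

/-- Key contraction lemma: if `x = y + γ • (P *ᵥ x)` with `P` nonnegative and
column-stochastic, then `(1-γ) * ‖x‖₁ ≤ ‖y‖₁`. -/
lemma key_contraction {S : Type*} [Fintype S]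
    (P : Matrix S S ℝ) (hPnn : ∀ s' s, 0 ≤ P s' s) (hPcol : ∀ s, ∑ s', P s' s = 1)
    (γ : ℝ) (hγ0 : 0 ≤ γ)
    (x y : S → ℝ) (h : x = y + γ • (P *ᵥ x)) :
    (1 - γ) * ∑ s, |x s| ≤ ∑ s, |y s| := by
  have hbound : ∑ s, |x s| ≤ ∑ s, |y s| + γ * ∑ s, |x s| := by
    calc ∑ s, |x s| = ∑ s, |y s + γ * (P *ᵥ x) s| := by
          refine Finset.sum_congr rfl fun s _ => ?_
          conv_lhs => rw [h]
          simp [Pi.add_apply, Pi.smul_apply, smul_eq_mul]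
      _ ≤ ∑ s, (|y s| + γ * ∑ t, P s t * |x t|) := by
          apply Finset.sum_le_sum
          intro s _
          refine le_trans (abs_add_le _ _) ?_
          gcongr
          rw [abs_mul, abs_of_nonneg hγ0]
          gcongr
          rw [Matrix.mulVec, dotProduct]
          refine le_trans (Finset.abs_sum_le_sum_abs _ _) ?_
          apply Finset.sum_le_sum
          intro t _
          rw [abs_mul, abs_of_nonneg (hPnn s t)]
      _ = ∑ s, |y s| + γ * ∑ s, ∑ t, P s t * |x t| := by
          rw [Finset.sum_add_distrib, Finset.mul_sum]
      _ = ∑ s, |y s| + γ * ∑ t, (∑ s, P s t) * |x t| := by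
          rw [Finset.sum_comm]
          simp [Finset.sum_mul]
      _ = ∑ s, |y s| + γ * ∑ t, |x t| := by simp [hPcol]
  nlinarith [hbound]

lemma isUnit_one_sub_smul {S : Type*} [Fintype S] [DecidableEq S]
    (P : Matrix S S ℝ) (hPnn : ∀ s' s, 0 ≤ P s' s) (hPcol : ∀ s, ∑ s', P s' s = 1)
    (γ : ℝ) (hγ0 : 0 ≤ γ) (hγ1 : γ < 1) :
    IsUnit (1 - γ • P) := by
  rw [← Matrix.mulVec_injective_iff_isUnit]
  have : Function.Injective ((1 - γ • P).mulVecLin) := by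
    rw [← LinearMap.ker_eq_bot]
    rw [LinearMap.ker_eq_bot']
    intro x hx
    simp only [Matrix.mulVecLin_apply] at hx
    have hx' : x = (1 - γ • P) *ᵥ x + γ • (P *ᵥ x) := by
      rw [Matrix.sub_mulVec, Matrix.smul_mulVec, Matrix.one_mulVec]
      abel
    rw [hx] at hx'
    rw [zero_add] at hx'
    have h0 := key_contraction P hPnn hPcol γ hγ0 x 0 (by simpa using hx')
    simp only [Pi.zero_apply, abs_zero, Finset.sum_const_zero] at h0
    have hsum : ∑ s, |x s| = 0 := by
      have hnn : 0 ≤ ∑ s, |x s| := Finset.sum_nonneg fun s _ => abs_nonneg _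
      nlinarith
    funext s
    have := (Finset.sum_eq_zero_iff_of_nonneg (fun s _ => abs_nonneg (x s))).mp hsum s
      (Finset.mem_univ s)
    simpa [abs_eq_zero] using this
  intro x y hxy
  exact this hxy

/-- for two policies with induced (column-stochastic) transition
matrices `P₁, P₂`, writing `d_π = (1-γ)(I - γ P^π)⁻¹ d₀` for the discounted
state distribution, the L1 distance between the two discounted state
distributions is bounded by `γ (1-γ)⁻¹ ‖(P^{π₁} - P^{π₂}) d_{π₂}‖₁`. -/
theorem stmt2 {S : Type*} [Fintype S] [DecidableEq S]
    (P1 P2 : Matrix S S ℝ)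
    (hP1nonneg : ∀ s' s, 0 ≤ P1 s' s) (hP2nonneg : ∀ s' s, 0 ≤ P2 s' s)
    (hP1col : ∀ s, ∑ s', P1 s' s = 1) (hP2col : ∀ s, ∑ s', P2 s' s = 1)
    (d0 : S → ℝ) (hd0nonneg : ∀ s, 0 ≤ d0 s) (hd0sum : ∑ s, d0 s = 1)
    (γ : ℝ) (hγ0 : 0 ≤ γ) (hγ1 : γ < 1)
    (d1 d2 : S → ℝ)
    (hd1 : d1 = (1 - γ) • ((1 - γ • P1)⁻¹ *ᵥ d0))
    (hd2 : d2 = (1 - γ) • ((1 - γ • P2)⁻¹ *ᵥ d0)) :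
    ∑ s, |d1 s - d2 s| ≤ γ * (1 - γ)⁻¹ * ∑ s, |((P1 - P2) *ᵥ d2) s| := by
  have hU1 := isUnit_one_sub_smul P1 hP1nonneg hP1col γ hγ0 hγ1
  have hU2 := isUnit_one_sub_smul P2 hP2nonneg hP2col γ hγ0 hγ1
  have hA1 : (1 - γ • P1) *ᵥ d1 = (1 - γ) • d0 := by
    rw [hd1, Matrix.mulVec_smul, Matrix.mulVec_mulVec,
      Matrix.mul_nonsing_inv _ ((Matrix.isUnit_iff_isUnit_det _).mp hU1),
      Matrix.one_mulVec]
  have hA2 : (1 - γ • P2) *ᵥ d2 = (1 - γ) • d0 := by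
    rw [hd2, Matrix.mulVec_smul, Matrix.mulVec_mulVec,
      Matrix.mul_nonsing_inv _ ((Matrix.isUnit_iff_isUnit_det _).mp hU2),
      Matrix.one_mulVec]
  set u : S → ℝ := d1 - d2 with hu
  set y : S → ℝ := γ • ((P1 - P2) *ᵥ d2) with hy
  have hkey : u = y + γ • (P1 *ᵥ u) := by
    have h1 : (1 - γ • P1) *ᵥ u = y := by
      have : (1 - γ • P1) *ᵥ d2 = (1 - γ • P2) *ᵥ d2 - γ • ((P1 - P2) *ᵥ d2) := by
        simp only [Matrix.sub_mulVec, Matrix.smul_mulVec, Matrix.one_mulVec]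
        module
      rw [hu, Matrix.mulVec_sub, hA1, this, hA2, hy]
      abel
    have : u = (1 - γ • P1) *ᵥ u + γ • (P1 *ᵥ u) := by
      rw [Matrix.sub_mulVec, Matrix.smul_mulVec, Matrix.one_mulVec]
      abel
    conv_lhs => rw [this, h1]
  have hcontr := key_contraction P1 hP1nonneg hP1col γ hγ0 u y hkey
  have hysum : ∑ s, |y s| = γ * ∑ s, |((P1 - P2) *ᵥ d2) s| := by
    rw [hy, Finset.mul_sum]
    congr 1
    funext s
    simp [abs_mul, abs_of_nonneg hγ0]
  have h1γ : 0 < 1 - γ := by linarith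
  have : ∑ s, |u s| ≤ (1 - γ)⁻¹ * ∑ s, |y s| := by
    rw [le_inv_mul_iff₀ h1γ]
    exact hcontr
  calc ∑ s, |d1 s - d2 s| = ∑ s, |u s| := by simp [hu]
    _ ≤ (1 - γ)⁻¹ * ∑ s, |y s| := this
    _ = γ * (1 - γ)⁻¹ * ∑ s, |((P1 - P2) *ᵥ d2) s| := by rw [hysum]; ring
end

section
/- Suppose the transition probabilities of an MDP are ρ-Lipschitz in an underlying action embedding: for all states s, s' and embeddings e_i, e_j, ‖P(s'|s,e_i) − P(s'|s,e_j)‖₁ ≤ ρ‖e_i − e_j‖₁. Let μ* be an optimal policy over the full embedding space E and π_k* an optimal policy over a finite available action set whose embeddings form an ε_k-cover of the embeddings used, i.e. every embedding has an available embedding within L1 distance ε_k. Then v^{μ*}(s₀) − v^{π_k*}(s₀) ≤ γρε_k R_max / (1−γ)². -/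
open scoped BigOperators

def probAt {S : Type*} [Fintype S] (P : S → S → ℝ) (d0 : S → ℝ) : ℕ → S → ℝ
  | 0 => d0
  | (t + 1) => fun s => ∑ s', probAt P d0 t s' * P s' s

noncomputable def dDisc {S : Type*} [Fintype S] (γ : ℝ) (P : S → S → ℝ)
    (d0 : S → ℝ) (s : S) : ℝ :=
  (1 - γ) * ∑' t : ℕ, γ ^ t * probAt P d0 t s

noncomputable def val {S : Type*} [Fintype S] (γ : ℝ) (P : S → S → ℝ)
    (d0 : S → ℝ) (R : S → ℝ) : ℝ :=
  (1 - γ)⁻¹ * ∑ s, dDisc γ P d0 s * R s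

def kern {S E : Type*} (Pt : S → E → S → ℝ) (π : S → E) : S → S → ℝ :=
  fun s s' => Pt s (π s) s'

section Aux

variable {S : Type*} [Fintype S]

lemma probAt_nonneg (P : S → S → ℝ) (d0 : S → ℝ)
    (hPn : ∀ s s', 0 ≤ P s s') (hd0n : ∀ s, 0 ≤ d0 s) :
    ∀ t s, 0 ≤ probAt P d0 t s := by
  intro t
  induction t with
  | zero => exact hd0n
  | succ t ih =>
    intro s
    exact Finset.sum_nonneg fun s' _ => mul_nonneg (ih s') (hPn s' s)

lemma probAt_sum_one (P : S → S → ℝ) (d0 : S → ℝ)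
    (hPs : ∀ s, ∑ s', P s s' = 1) (hd0s : ∑ s, d0 s = 1) :
    ∀ t, ∑ s, probAt P d0 t s = 1 := by
  intro t
  induction t with
  | zero => exact hd0s
  | succ t ih =>
    show ∑ s, ∑ s', probAt P d0 t s' * P s' s = 1
    rw [Finset.sum_comm]
    simp only [← Finset.mul_sum, hPs, mul_one]
    exact ih

lemma probAt_le_one (P : S → S → ℝ) (d0 : S → ℝ)
    (hPn : ∀ s s', 0 ≤ P s s') (hPs : ∀ s, ∑ s', P s s' = 1)
    (hd0n : ∀ s, 0 ≤ d0 s) (hd0s : ∑ s, d0 s = 1) (t : ℕ) (s : S) :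
    probAt P d0 t s ≤ 1 := by
  rw [← probAt_sum_one P d0 hPs hd0s t]
  exact Finset.single_le_sum (fun s' _ => probAt_nonneg P d0 hPn hd0n t s')
    (Finset.mem_univ s)

lemma probAt_diff (P Q : S → S → ℝ) (d0 : S → ℝ)
    (hPn : ∀ s s', 0 ≤ P s s') (hPs : ∀ s, ∑ s', P s s' = 1)
    (hQn : ∀ s s', 0 ≤ Q s s') (hQs : ∀ s, ∑ s', Q s s' = 1)
    (hd0n : ∀ s, 0 ≤ d0 s) (hd0s : ∑ s, d0 s = 1)
    (δ : ℝ) (hrow : ∀ s, ∑ s', |P s s' - Q s s'| ≤ δ) :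
    ∀ t, ∑ s, |probAt P d0 t s - probAt Q d0 t s| ≤ t * δ := by
  intro t
  induction t with
  | zero => simp [probAt]
  | succ t ih =>
    have key : ∀ s, |probAt P d0 (t+1) s - probAt Q d0 (t+1) s|
        ≤ ∑ s', |probAt P d0 t s' - probAt Q d0 t s'| * P s' s
          + ∑ s', probAt Q d0 t s' * |P s' s - Q s' s| := by
      intro s
      have hdec : probAt P d0 (t+1) s - probAt Q d0 (t+1) s
          = ∑ s', ((probAt P d0 t s' - probAt Q d0 t s') * P s' s
              + probAt Q d0 t s' * (P s' s - Q s' s)) := by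
        show (∑ s', probAt P d0 t s' * P s' s)
            - (∑ s', probAt Q d0 t s' * Q s' s) = _
        rw [← Finset.sum_sub_distrib]
        refine Finset.sum_congr rfl fun s' _ => by ring
      rw [hdec, ← Finset.sum_add_distrib]
      refine (Finset.abs_sum_le_sum_abs _ _).trans
        (Finset.sum_le_sum fun s' _ => ?_)
      refine (abs_add_le _ _).trans (le_of_eq ?_)
      rw [abs_mul, abs_mul, abs_of_nonneg (hPn s' s),
        abs_of_nonneg (probAt_nonneg Q d0 hQn hd0n t s')]
    calc ∑ s, |probAt P d0 (t+1) s - probAt Q d0 (t+1) s|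
        ≤ ∑ s, (∑ s', |probAt P d0 t s' - probAt Q d0 t s'| * P s' s
            + ∑ s', probAt Q d0 t s' * |P s' s - Q s' s|) :=
          Finset.sum_le_sum fun s _ => key s
      _ = (∑ s', |probAt P d0 t s' - probAt Q d0 t s'| * ∑ s, P s' s)
          + ∑ s', probAt Q d0 t s' * ∑ s, |P s' s - Q s' s| := by
          rw [Finset.sum_add_distrib]
          congr 1
          · rw [Finset.sum_comm]; simp [← Finset.mul_sum]
          · rw [Finset.sum_comm]; simp [← Finset.mul_sum]
      _ ≤ t * δ + 1 * δ := by
          refine add_le_add ?_ ?_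
          · simp only [hPs, mul_one]; exact ih
          · calc ∑ s', probAt Q d0 t s' * ∑ s, |P s' s - Q s' s|
                ≤ ∑ s', probAt Q d0 t s' * δ :=
                Finset.sum_le_sum fun s' _ =>
                  mul_le_mul_of_nonneg_left (hrow s')
                    (probAt_nonneg Q d0 hQn hd0n t s')
              _ = 1 * δ := by
                  rw [← Finset.sum_mul, probAt_sum_one Q d0 hQs hd0s]
      _ = (↑(t+1)) * δ := by push_cast; ring

lemma val_eq_tsum (γ : ℝ) (hγ0 : 0 ≤ γ) (hγ1 : γ < 1)
    (P : S → S → ℝ) (hPn : ∀ s s', 0 ≤ P s s') (hPs : ∀ s, ∑ s', P s s' = 1)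
    (d0 : S → ℝ) (hd0n : ∀ s, 0 ≤ d0 s) (hd0s : ∑ s, d0 s = 1)
    (R : S → ℝ) :
    val γ P d0 R = ∑' t : ℕ, γ ^ t * ∑ s, probAt P d0 t s * R s := by
  have hsum : ∀ s : S, Summable fun t : ℕ => γ ^ t * probAt P d0 t s := by
    intro s
    refine Summable.of_nonneg_of_le
      (fun t => mul_nonneg (pow_nonneg hγ0 t) (probAt_nonneg P d0 hPn hd0n t s))
      (fun t => ?_) (summable_geometric_of_lt_one hγ0 hγ1)
    exact mul_le_of_le_one_right (pow_nonneg hγ0 t)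
      (probAt_le_one P d0 hPn hPs hd0n hd0s t s)
  unfold val dDisc
  have h1γ : (1 - γ) ≠ 0 := by linarith
  rw [show ∑ s, ((1 - γ) * ∑' t : ℕ, γ ^ t * probAt P d0 t s) * R s
      = (1 - γ) * ∑ s, (∑' t : ℕ, γ ^ t * probAt P d0 t s) * R s by
    rw [Finset.mul_sum]; exact Finset.sum_congr rfl fun s _ => by ring]
  rw [inv_mul_cancel_left₀ h1γ]
  have : ∀ s : S, (∑' t : ℕ, γ ^ t * probAt P d0 t s) * R s
      = ∑' t : ℕ, γ ^ t * probAt P d0 t s * R s := fun s =>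
    (tsum_mul_right).symm
  simp only [this]
  rw [← Summable.tsum_finsetSum (fun s _ => (hsum s).mul_right (R s))]
  refine tsum_congr fun t => ?_
  rw [Finset.mul_sum]
  exact Finset.sum_congr rfl fun s _ => by ring

end Aux

/-- Theorem 1: under the ρ-Lipschitz condition on transitions in
the action embedding, if `μ` is optimal over all embedding policies and `πk`
is optimal among policies using only available embeddings `A`, where every
embedding used by `μ` has an available embedding within L1 distance `ε`, then
`v^{μ*}(s₀) - v^{π_k*}(s₀) ≤ γ ρ ε Rmax / (1-γ)²`. -/
theorem stmt4 {S : Type*} [Fintype S] {d : ℕ}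
    (γ ρ ε Rmax : ℝ) (hγ0 : 0 ≤ γ) (hγ1 : γ < 1) (hρ : 0 < ρ)
    (Pt : S → (Fin d → ℝ) → S → ℝ)
    (hPtnonneg : ∀ s e s', 0 ≤ Pt s e s')
    (hPtsum : ∀ s e, ∑ s', Pt s e s' = 1)
    (hLip : ∀ s (e₁ e₂ : Fin d → ℝ),
      ∑ s', |Pt s e₁ s' - Pt s e₂ s'| ≤ ρ * ∑ i, |e₁ i - e₂ i|)
    (R : S → ℝ) (hR : ∀ s, |R s| ≤ Rmax)
    (d0 : S → ℝ) (hd0nonneg : ∀ s, 0 ≤ d0 s) (hd0sum : ∑ s, d0 s = 1)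
    (A : Set (Fin d → ℝ))
    (μ πk : S → (Fin d → ℝ))
    (hμopt : ∀ π : S → (Fin d → ℝ),
      val γ (kern Pt π) d0 R ≤ val γ (kern Pt μ) d0 R)
    (hπkA : ∀ s, πk s ∈ A)
    (hπkopt : ∀ π : S → (Fin d → ℝ), (∀ s, π s ∈ A) →
      val γ (kern Pt π) d0 R ≤ val γ (kern Pt πk) d0 R)
    (hcover : ∀ s, ∃ e' ∈ A, ∑ i, |μ s i - e' i| ≤ ε) :
    val γ (kern Pt μ) d0 R - val γ (kern Pt πk) d0 R
      ≤ γ * ρ * ε * Rmax / (1 - γ) ^ 2 := by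
  classical
  have hS : Nonempty S := by
    by_contra h
    rw [not_nonempty_iff] at h
    simp at hd0sum
  have hRmax : 0 ≤ Rmax := (abs_nonneg _).trans (hR (Classical.arbitrary S))
  choose pb hpbA hpbd using hcover
  have hε : 0 ≤ ε :=
    (Finset.sum_nonneg fun i _ => abs_nonneg _).trans (hpbd (Classical.arbitrary S))
  set P := kern Pt μ
  set Q := kern Pt pb
  have hPn : ∀ s s', 0 ≤ P s s' := fun s s' => hPtnonneg s (μ s) s'
  have hPs : ∀ s, ∑ s', P s s' = 1 := fun s => hPtsum s (μ s)
  have hQn : ∀ s s', 0 ≤ Q s s' := fun s s' => hPtnonneg s (pb s) s'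
  have hQs : ∀ s, ∑ s', Q s s' = 1 := fun s => hPtsum s (pb s)
  have hrow : ∀ s, ∑ s', |P s s' - Q s s'| ≤ ρ * ε := fun s =>
    (hLip s (μ s) (pb s)).trans (mul_le_mul_of_nonneg_left (hpbd s) hρ.le)
  have hdiff := probAt_diff P Q d0 hPn hPs hQn hQs hd0nonneg hd0sum (ρ * ε) hrow
  -- values as tsums
  set F : ℕ → ℝ := fun t => ∑ s, probAt P d0 t s * R s with hF
  set G : ℕ → ℝ := fun t => ∑ s, probAt Q d0 t s * R s with hG
  have hvalP : val γ P d0 R = ∑' t : ℕ, γ ^ t * F t :=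
    val_eq_tsum γ hγ0 hγ1 P hPn hPs d0 hd0nonneg hd0sum R
  have hvalQ : val γ Q d0 R = ∑' t : ℕ, γ ^ t * G t :=
    val_eq_tsum γ hγ0 hγ1 Q hQn hQs d0 hd0nonneg hd0sum R
  have hγn : ‖γ‖ < 1 := by rw [Real.norm_eq_abs, abs_of_nonneg hγ0]; exact hγ1
  have hboundF : ∀ (K : S → S → ℝ) (hKn : ∀ s s', 0 ≤ K s s')
      (hKs : ∀ s, ∑ s', K s s' = 1) (t : ℕ),
      |∑ s, probAt K d0 t s * R s| ≤ Rmax := by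
    intro K hKn hKs t
    calc |∑ s, probAt K d0 t s * R s| ≤ ∑ s, |probAt K d0 t s * R s| :=
          Finset.abs_sum_le_sum_abs _ _
      _ ≤ ∑ s, probAt K d0 t s * Rmax := by
          refine Finset.sum_le_sum fun s _ => ?_
          rw [abs_mul, abs_of_nonneg (probAt_nonneg K d0 hKn hd0nonneg t s)]
          exact mul_le_mul_of_nonneg_left (hR s)
            (probAt_nonneg K d0 hKn hd0nonneg t s)
      _ = Rmax := by rw [← Finset.sum_mul, probAt_sum_one K d0 hKs hd0sum, one_mul]
  have hsumF : Summable fun t : ℕ => γ ^ t * F t := by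
    refine Summable.of_norm_bounded
      ((summable_geometric_of_lt_one hγ0 hγ1).mul_left Rmax) fun t => ?_
    rw [Real.norm_eq_abs, abs_mul, abs_of_nonneg (pow_nonneg hγ0 t)]
    rw [mul_comm]
    exact mul_le_mul_of_nonneg_right (hboundF P hPn hPs t) (pow_nonneg hγ0 t)
  have hsumG : Summable fun t : ℕ => γ ^ t * G t := by
    refine Summable.of_norm_bounded
      ((summable_geometric_of_lt_one hγ0 hγ1).mul_left Rmax) fun t => ?_
    rw [Real.norm_eq_abs, abs_mul, abs_of_nonneg (pow_nonneg hγ0 t)]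
    rw [mul_comm]
    exact mul_le_mul_of_nonneg_right (hboundF Q hQn hQs t) (pow_nonneg hγ0 t)
  have hterm : ∀ t : ℕ, γ ^ t * F t - γ ^ t * G t
      ≤ (ρ * ε * Rmax) * ((t : ℝ) * γ ^ t) := by
    intro t
    have h1 : F t - G t ≤ (t : ℝ) * (ρ * ε) * Rmax := by
      calc F t - G t = ∑ s, (probAt P d0 t s - probAt Q d0 t s) * R s := by
            rw [hF, hG, ← Finset.sum_sub_distrib]
            exact Finset.sum_congr rfl fun s _ => by ring
        _ ≤ ∑ s, |probAt P d0 t s - probAt Q d0 t s| * Rmax := by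
            refine Finset.sum_le_sum fun s _ => ?_
            calc (probAt P d0 t s - probAt Q d0 t s) * R s
                ≤ |(probAt P d0 t s - probAt Q d0 t s) * R s| := le_abs_self _
              _ = |probAt P d0 t s - probAt Q d0 t s| * |R s| := abs_mul _ _
              _ ≤ |probAt P d0 t s - probAt Q d0 t s| * Rmax :=
                  mul_le_mul_of_nonneg_left (hR s) (abs_nonneg _)
        _ = (∑ s, |probAt P d0 t s - probAt Q d0 t s|) * Rmax :=
            (Finset.sum_mul _ _ _).symm
        _ ≤ (t : ℝ) * (ρ * ε) * Rmax :=
            mul_le_mul_of_nonneg_right (hdiff t) hRmax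
    calc γ ^ t * F t - γ ^ t * G t = γ ^ t * (F t - G t) := by ring
      _ ≤ γ ^ t * ((t : ℝ) * (ρ * ε) * Rmax) :=
          mul_le_mul_of_nonneg_left h1 (pow_nonneg hγ0 t)
      _ = (ρ * ε * Rmax) * ((t : ℝ) * γ ^ t) := by ring
  have hsumR : Summable fun t : ℕ => (ρ * ε * Rmax) * ((t : ℝ) * γ ^ t) := by
    have := summable_pow_mul_geometric_of_norm_lt_one (R := ℝ) 1 hγn
    simp only [pow_one] at this
    exact this.mul_left _
  have hmain : val γ P d0 R - val γ Q d0 R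
      ≤ γ * ρ * ε * Rmax / (1 - γ) ^ 2 := by
    rw [hvalP, hvalQ, ← Summable.tsum_sub hsumF hsumG]
    calc ∑' t : ℕ, (γ ^ t * F t - γ ^ t * G t)
        ≤ ∑' t : ℕ, (ρ * ε * Rmax) * ((t : ℝ) * γ ^ t) :=
          Summable.tsum_le_tsum hterm (hsumF.sub hsumG) hsumR
      _ = (ρ * ε * Rmax) * ∑' t : ℕ, (t : ℝ) * γ ^ t := tsum_mul_left
      _ = (ρ * ε * Rmax) * (γ / (1 - γ) ^ 2) := by
          rw [tsum_coe_mul_geometric_of_norm_lt_one hγn]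
      _ = γ * ρ * ε * Rmax / (1 - γ) ^ 2 := by ring
  have hQle : val γ Q d0 R ≤ val γ (kern Pt πk) d0 R := hπkopt pb hpbA
  linarith
end
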